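/- Let β > 0 and let f : (0,∞) → ℝ be such that z ↦ z^{β-1} f(z) is integrable on (0,∞). Let Z be a real random variable such that |Z| has a density p on (0,∞), with sup_{z>0} z^{1-β} p(z) < ∞ and lim_{z→0} z^{1-β} p(z) = c_Z ∈ (0,∞). Then lim_{t→∞} t^β E[f(t|Z|)] = c_Z ∫_0^∞ z^{β-1} f(z) dz. -/

import Mathlib

open MeasureTheory Filter Set
open scoped ENNReal NNReal Topology

/-- If `|Z|` has a `(β, c_Z)`-regular density `p` on `(0,∞)` and `z^{β-1} f(z)` is
integrable on `(0,∞)`, then `t^β E[f(t|Z|)] → c_Z ∫_0^∞ z^{β-1} f(z) dz` as `t → ∞`. -/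
theorem tendsto_rpow_mul_integral_comp {Ω : Type*} [MeasurableSpace Ω]
    (μ : Measure Ω) [IsProbabilityMeasure μ]
    (Z : Ω → ℝ) (hZ : Measurable Z) (β cZ : ℝ) (hβ : 0 < β) (hcZ : 0 < cZ)
    (p : ℝ → ℝ) (hp0 : ∀ z, 0 ≤ p z) (hpsupp : ∀ z ≤ (0 : ℝ), p z = 0)
    (hdens : Measure.map (fun ω => |Z ω|) μ =
      (volume : Measure ℝ).withDensity (fun z => ENNReal.ofReal (p z)))
    (hbound : ∃ C, ∀ z > (0 : ℝ), z ^ (1 - β) * p z ≤ C)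
    (hlim : Tendsto (fun z => z ^ (1 - β) * p z) (nhdsWithin 0 (Ioi 0)) (nhds cZ))
    (f : ℝ → ℝ) (hfm : Measurable f)
    (hf : IntegrableOn (fun z => z ^ (β - 1) * f z) (Ioi 0)) :
    Tendsto (fun t => t ^ β * ∫ ω, f (t * |Z ω|) ∂μ) atTop
      (nhds (cZ * ∫ z in Ioi (0 : ℝ), z ^ (β - 1) * f z)) := by
  classical
  obtain ⟨C, hC⟩ := hbound
  set F0 : ℝ → ℝ≥0∞ := fun z => ENNReal.ofReal (p z) with hF0def
  set ν : Measure ℝ := Measure.map (fun ω => |Z ω|) μ with hνdef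
  haveI : IsProbabilityMeasure ν := Measure.isProbabilityMeasure_map hZ.abs.aemeasurable
  have hac : ν ≪ (volume : Measure ℝ) := by
    rw [hdens]; exact withDensity_absolutelyContinuous _ _
  set g : ℝ → ℝ≥0∞ := ν.rnDeriv volume with hgdef
  have hg : Measurable g := Measure.measurable_rnDeriv _ _
  have hν' : (volume : Measure ℝ).withDensity g = ν :=
    Measure.withDensity_rnDeriv_eq ν volume hac
  have hWD : (volume : Measure ℝ).withDensity F0 = (volume : Measure ℝ).withDensity g := by
    rw [hν', ← hdens]
  -- transfer pointwise bounds on `F0` to a.e. bounds on `g`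
  have key_le : ∀ (H : ℝ → ℝ≥0∞), Measurable H → ∀ s : Set ℝ, MeasurableSet s →
      (∀ z ∈ s, F0 z ≤ H z) → ∀ᵐ z ∂(volume : Measure ℝ), z ∈ s → g z ≤ H z := by
    intro H hH s hs hle
    rw [← ae_restrict_iff' hs]
    refine ae_le_of_forall_setLIntegral_le_of_sigmaFinite hg (fun A hA _ => ?_)
    rw [Measure.restrict_restrict hA]
    calc ∫⁻ x in A ∩ s, g x = (volume : Measure ℝ).withDensity g (A ∩ s) :=
          (withDensity_apply _ (hA.inter hs)).symm
      _ = (volume : Measure ℝ).withDensity F0 (A ∩ s) := by rw [hWD]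
      _ = ∫⁻ x in A ∩ s, F0 x := withDensity_apply _ (hA.inter hs)
      _ ≤ ∫⁻ x in A ∩ s, H x := setLIntegral_mono hH (fun x hx => hle x hx.2)
  have key_ge : ∀ (H : ℝ → ℝ≥0∞), Measurable H → ∀ s : Set ℝ, MeasurableSet s →
      (∀ z ∈ s, H z ≤ F0 z) → ∀ᵐ z ∂(volume : Measure ℝ), z ∈ s → H z ≤ g z := by
    intro H hH s hs hle
    rw [← ae_restrict_iff' hs]
    refine ae_le_of_forall_setLIntegral_le_of_sigmaFinite hH (fun A hA _ => ?_)
    rw [Measure.restrict_restrict hA]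
    have h1 : ∫⁻ x in A ∩ s, H x = ∫⁻ x in A ∩ s, s.indicator H x := by
      refine setLIntegral_congr_fun (hA.inter hs) (fun x hx => ?_)
      rw [indicator_of_mem hx.2]
    have h2 : ∫⁻ x in A ∩ s, s.indicator H x ≤ ∫⁻ x in A ∩ s, F0 x := by
      refine lintegral_mono (fun x => ?_)
      by_cases hx : x ∈ s
      · rw [indicator_of_mem hx]; exact hle x hx
      · rw [indicator_of_notMem hx]; exact zero_le
    calc ∫⁻ x in A ∩ s, H x = ∫⁻ x in A ∩ s, s.indicator H x := h1
      _ ≤ ∫⁻ x in A ∩ s, F0 x := h2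
      _ = (volume : Measure ℝ).withDensity F0 (A ∩ s) :=
          (withDensity_apply _ (hA.inter hs)).symm
      _ = (volume : Measure ℝ).withDensity g (A ∩ s) := by rw [hWD]
      _ = ∫⁻ x in A ∩ s, g x := withDensity_apply _ (hA.inter hs)
  -- the basic rpow algebra
  have hzz : ∀ z : ℝ, 0 < z → z ^ (β - 1) * z ^ (1 - β) = 1 := by
    intro z hz; rw [← Real.rpow_add hz]; norm_num
  have hzz' : ∀ z : ℝ, 0 < z → z ^ (1 - β) * z ^ (β - 1) = 1 := by
    intro z hz; rw [← Real.rpow_add hz]; norm_num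
  have hpform : ∀ z : ℝ, 0 < z → p z = z ^ (β - 1) * (z ^ (1 - β) * p z) := by
    intro z hz; rw [← mul_assoc, hzz z hz, one_mul]
  -- choose δ n from the limit hypothesis
  have hδ : ∀ n : ℕ, ∃ δ > (0 : ℝ), ∀ z : ℝ, 0 < z → z < δ →
      |z ^ (1 - β) * p z - cZ| ≤ 1 / ((n : ℝ) + 1) := by
    intro n
    rcases Metric.tendsto_nhdsWithin_nhds.mp hlim (1 / ((n : ℝ) + 1)) (by positivity) with
      ⟨δ, hδpos, h⟩
    refine ⟨δ, hδpos, fun z hz hzδ => ?_⟩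
    have := h (mem_Ioi.mpr hz) (by rw [Real.dist_eq, sub_zero, abs_of_pos hz]; exact hzδ)
    rw [Real.dist_eq] at this
    exact this.le
  choose δ hδpos hδprop using hδ
  -- a.e. properties of g
  have hgfin : ∀ᵐ z ∂(volume : Measure ℝ), g z < ∞ := Measure.rnDeriv_lt_top ν volume
  have hν0 : ν (Iic 0) = 0 := by
    rw [hdens, withDensity_apply _ measurableSet_Iic]
    refine le_antisymm ?_ zero_le
    calc ∫⁻ z in Iic 0, F0 z ≤ ∫⁻ _ in Iic (0 : ℝ), 0 :=
          setLIntegral_mono measurable_const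
            (fun z hz => by simp [hF0def, hpsupp z hz])
      _ = 0 := by simp
  have hIic : ∀ᵐ z ∂(volume : Measure ℝ), z ∈ Iic 0 → g z = 0 := by
    have h0 : ∫⁻ z in Iic (0 : ℝ), g z = 0 := by
      rw [← withDensity_apply _ measurableSet_Iic, hν', hν0]
    have := (lintegral_eq_zero_iff hg).mp h0
    rw [EventuallyEq, ae_restrict_iff' measurableSet_Iic] at this
    filter_upwards [this] with z hz hz0 using hz hz0
  have hub : ∀ᵐ z ∂(volume : Measure ℝ), z ∈ Ioi 0 →
      g z ≤ ENNReal.ofReal (C * z ^ (β - 1)) := by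
    refine key_le _ (by fun_prop) _ measurableSet_Ioi (fun z hz => ?_)
    have hz' : (0 : ℝ) < z := hz
    refine ENNReal.ofReal_le_ofReal ?_
    rw [hpform z hz']
    calc z ^ (β - 1) * (z ^ (1 - β) * p z) ≤ z ^ (β - 1) * C :=
        mul_le_mul_of_nonneg_left (hC z hz') (Real.rpow_nonneg hz'.le _)
      _ = C * z ^ (β - 1) := mul_comm _ _
  have hlo : ∀ n : ℕ, ∀ᵐ z ∂(volume : Measure ℝ), z ∈ Ioo 0 (δ n) →
      ENNReal.ofReal ((cZ - 1 / ((n : ℝ) + 1)) * z ^ (β - 1)) ≤ g z := by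
    intro n
    refine key_ge _ (by fun_prop) _ measurableSet_Ioo (fun z hz => ?_)
    refine ENNReal.ofReal_le_ofReal ?_
    have h := (abs_le.mp (hδprop n z hz.1 hz.2)).1
    rw [hpform z hz.1]
    nlinarith [Real.rpow_nonneg hz.1.le (β - 1), h]
  have hup : ∀ n : ℕ, ∀ᵐ z ∂(volume : Measure ℝ), z ∈ Ioo 0 (δ n) →
      g z ≤ ENNReal.ofReal ((cZ + 1 / ((n : ℝ) + 1)) * z ^ (β - 1)) := by
    intro n
    refine key_le _ (by fun_prop) _ measurableSet_Ioo (fun z hz => ?_)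
    refine ENNReal.ofReal_le_ofReal ?_
    have h := (abs_le.mp (hδprop n z hz.1 hz.2)).2
    rw [hpform z hz.1]
    nlinarith [Real.rpow_nonneg hz.1.le (β - 1), h]
  have hae : ∀ᵐ z ∂(volume : Measure ℝ), g z < ∞ ∧ (z ∈ Iic 0 → g z = 0) ∧
      (z ∈ Ioi 0 → g z ≤ ENNReal.ofReal (C * z ^ (β - 1))) ∧
      ∀ n : ℕ, z ∈ Ioo 0 (δ n) →
        ENNReal.ofReal ((cZ - 1 / ((n : ℝ) + 1)) * z ^ (β - 1)) ≤ g z ∧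
        g z ≤ ENNReal.ofReal ((cZ + 1 / ((n : ℝ) + 1)) * z ^ (β - 1)) := by
    have hn : ∀ᵐ z ∂(volume : Measure ℝ), ∀ n : ℕ, z ∈ Ioo 0 (δ n) →
        ENNReal.ofReal ((cZ - 1 / ((n : ℝ) + 1)) * z ^ (β - 1)) ≤ g z ∧
        g z ≤ ENNReal.ofReal ((cZ + 1 / ((n : ℝ) + 1)) * z ^ (β - 1)) := by
      rw [ae_all_iff]
      intro n
      filter_upwards [hlo n, hup n] with z h1 h2 hz using ⟨h1 hz, h2 hz⟩
    filter_upwards [hgfin, hIic, hub, hn] with z h1 h2 h3 h4 using ⟨h1, h2, h3, h4⟩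
  obtain ⟨S, hSsub, hSmeas, hSnull⟩ := exists_measurable_superset_of_null (ae_iff.mp hae)
  have hgood : ∀ z, z ∉ S → g z < ∞ ∧ (z ∈ Iic 0 → g z = 0) ∧
      (z ∈ Ioi 0 → g z ≤ ENNReal.ofReal (C * z ^ (β - 1))) ∧
      ∀ n : ℕ, z ∈ Ioo 0 (δ n) →
        ENNReal.ofReal ((cZ - 1 / ((n : ℝ) + 1)) * z ^ (β - 1)) ≤ g z ∧
        g z ≤ ENNReal.ofReal ((cZ + 1 / ((n : ℝ) + 1)) * z ^ (β - 1)) := by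
    intro z hz
    by_contra h
    exact hz (hSsub h)
  -- the good version of the density
  set q : ℝ → ℝ := fun z => if z ≤ 0 then 0 else if z ∈ S then cZ * z ^ (β - 1)
    else (g z).toReal with hqdef
  have hqmeas : Measurable q := by
    refine Measurable.ite measurableSet_Iic measurable_const ?_
    exact Measurable.ite hSmeas (by fun_prop) hg.ennreal_toReal
  have hq0 : ∀ z, 0 ≤ q z := by
    intro z
    by_cases h1 : z ≤ 0
    · simp [hqdef, h1]
    · by_cases h2 : z ∈ S
      · have : (0:ℝ) < z := lt_of_not_ge h1
        simp only [hqdef, if_neg h1, if_pos h2]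
        positivity
      · simp only [hqdef, if_neg h1, if_neg h2]
        exact ENNReal.toReal_nonneg
  set M : ℝ := max C cZ with hMdef
  have hM : 0 < M := lt_of_lt_of_le hcZ (le_max_right _ _)
  have hqle : ∀ z : ℝ, 0 < z → q z ≤ M * z ^ (β - 1) := by
    intro z hz
    have h1 : ¬ z ≤ 0 := not_le.mpr hz
    by_cases h2 : z ∈ S
    · simp only [hqdef, if_neg h1, if_pos h2]
      exact mul_le_mul_of_nonneg_right (le_max_right _ _) (Real.rpow_nonneg hz.le _)
    · simp only [hqdef, if_neg h1, if_neg h2]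
      have hle := (hgood z h2).2.2.1 (mem_Ioi.mpr hz)
      calc (g z).toReal ≤ (ENNReal.ofReal (C * z ^ (β - 1))).toReal :=
            ENNReal.toReal_mono ENNReal.ofReal_ne_top hle
        _ = max (C * z ^ (β - 1)) 0 := ENNReal.toReal_ofReal'
        _ ≤ M * z ^ (β - 1) := by
            refine max_le ?_ (by positivity)
            exact mul_le_mul_of_nonneg_right (le_max_left _ _) (Real.rpow_nonneg hz.le _)
  have hqlim : ∀ n : ℕ, ∀ z : ℝ, 0 < z → z < δ n →
      |z ^ (1 - β) * q z - cZ| ≤ 1 / ((n : ℝ) + 1) := by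
    intro n z hz hzδ
    have h1 : ¬ z ≤ 0 := not_le.mpr hz
    have hεpos : (0:ℝ) < 1 / ((n : ℝ) + 1) := by positivity
    by_cases h2 : z ∈ S
    · simp only [hqdef, if_neg h1, if_pos h2]
      have : z ^ (1 - β) * (cZ * z ^ (β - 1)) = cZ := by
        rw [show z ^ (1 - β) * (cZ * z ^ (β - 1)) = (z ^ (1 - β) * z ^ (β - 1)) * cZ by ring,
          hzz' z hz, one_mul]
      rw [this, sub_self, abs_zero]
      exact hεpos.le
    · simp only [hqdef, if_neg h1, if_neg h2]
      obtain ⟨hfin, _, _, hn⟩ := hgood z h2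
      obtain ⟨hl, hu⟩ := hn n ⟨hz, hzδ⟩
      have hup' : (g z).toReal ≤ (cZ + 1 / ((n : ℝ) + 1)) * z ^ (β - 1) := by
        calc (g z).toReal ≤ (ENNReal.ofReal ((cZ + 1 / ((n : ℝ) + 1)) * z ^ (β - 1))).toReal :=
              ENNReal.toReal_mono ENNReal.ofReal_ne_top hu
          _ = max ((cZ + 1 / ((n : ℝ) + 1)) * z ^ (β - 1)) 0 := ENNReal.toReal_ofReal'
          _ = (cZ + 1 / ((n : ℝ) + 1)) * z ^ (β - 1) := by
              refine max_eq_left ?_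
              positivity
      have hlo' : (cZ - 1 / ((n : ℝ) + 1)) * z ^ (β - 1) ≤ (g z).toReal :=
        (ENNReal.ofReal_le_iff_le_toReal hfin.ne).mp hl
      have e1 : z ^ (1 - β) * ((cZ - 1 / ((n : ℝ) + 1)) * z ^ (β - 1)) =
          cZ - 1 / ((n : ℝ) + 1) := by
        rw [show z ^ (1 - β) * ((cZ - 1 / ((n : ℝ) + 1)) * z ^ (β - 1)) =
          (z ^ (1 - β) * z ^ (β - 1)) * (cZ - 1 / ((n : ℝ) + 1)) by ring, hzz' z hz, one_mul]
      have e2 : z ^ (1 - β) * ((cZ + 1 / ((n : ℝ) + 1)) * z ^ (β - 1)) =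
          cZ + 1 / ((n : ℝ) + 1) := by
        rw [show z ^ (1 - β) * ((cZ + 1 / ((n : ℝ) + 1)) * z ^ (β - 1)) =
          (z ^ (1 - β) * z ^ (β - 1)) * (cZ + 1 / ((n : ℝ) + 1)) by ring, hzz' z hz, one_mul]
      have hrp : (0:ℝ) ≤ z ^ (1 - β) := Real.rpow_nonneg hz.le _
      have b1 : cZ - 1 / ((n : ℝ) + 1) ≤ z ^ (1 - β) * (g z).toReal := by
        rw [← e1]; exact mul_le_mul_of_nonneg_left hlo' hrp
      have b2 : z ^ (1 - β) * (g z).toReal ≤ cZ + 1 / ((n : ℝ) + 1) := by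
        rw [← e2]; exact mul_le_mul_of_nonneg_left hup' hrp
      rw [abs_le]
      constructor <;> linarith
  -- the tendsto property of the good density
  have tendsto_w : Tendsto (fun z => z ^ (1 - β) * q z) (nhdsWithin 0 (Ioi 0)) (nhds cZ) := by
    rw [Metric.tendsto_nhdsWithin_nhds]
    intro ε hε
    obtain ⟨n, hn⟩ := exists_nat_one_div_lt hε
    refine ⟨δ n, hδpos n, fun z hz hdist => ?_⟩
    have hz' : (0:ℝ) < z := hz
    rw [Real.dist_eq, sub_zero, abs_of_pos hz'] at hdist
    rw [Real.dist_eq]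
    exact lt_of_le_of_lt (hqlim n z hz' hdist) hn
  -- q agrees a.e. with g
  have hSae : ∀ᵐ z ∂(volume : Measure ℝ), z ∉ S := by
    rw [ae_iff]
    simpa using hSnull
  have hqae : (fun z => ENNReal.ofReal (q z)) =ᵐ[(volume : Measure ℝ)] g := by
    filter_upwards [hSae] with z hz
    by_cases h1 : z ≤ 0
    · simp only [hqdef, if_pos h1]
      rw [(hgood z hz).2.1 h1]
      simp
    · simp only [hqdef, if_neg h1, if_neg hz]
      exact ENNReal.ofReal_toReal (hgood z hz).1.ne
  have hν'' : (volume : Measure ℝ).withDensity (fun z => ((Real.toNNReal (q z) : ℝ≥0) : ℝ≥0∞))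
      = ν := by
    rw [← hν']
    exact withDensity_congr_ae hqae
  -- the representation formula for t > 0
  have hrepr : ∀ t : ℝ, 0 < t → t ^ β * ∫ ω, f (t * |Z ω|) ∂μ =
      ∫ u in Ioi (0:ℝ), u ^ (β - 1) * f u * ((t⁻¹ * u) ^ (1 - β) * q (t⁻¹ * u)) := by
    intro t ht
    have h1 : ∫ ω, f (t * |Z ω|) ∂μ = ∫ z, f (t * z) ∂ν :=
      (integral_map hZ.abs.aemeasurable
        ((hfm.comp (measurable_const_mul t)).aestronglyMeasurable)).symm
    have h2 : ∫ z, f (t * z) ∂ν = ∫ z, q z * f (t * z) := by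
      rw [← hν'', integral_withDensity_eq_integral_smul (by fun_prop) (fun z => f (t * z))]
      refine integral_congr_ae (ae_of_all _ fun z => ?_)
      simp [NNReal.smul_def, Real.coe_toNNReal _ (hq0 z)]
    have h3 : ∫ z, q z * f (t * z) = ∫ z in Ioi (0:ℝ), q z * f (t * z) := by
      refine (setIntegral_eq_integral_of_forall_compl_eq_zero (fun z hz => ?_)).symm
      have hz' : z ≤ 0 := by simpa [mem_Ioi, not_lt] using hz
      simp [hqdef, hz']
    have h4 : ∫ z in Ioi (0:ℝ), q z * f (t * z) =
        t⁻¹ * ∫ u in Ioi (0:ℝ), q (t⁻¹ * u) * f u := by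
      calc ∫ z in Ioi (0:ℝ), q z * f (t * z)
          = ∫ z in Ioi (0:ℝ), (fun u => q (t⁻¹ * u) * f u) (t * z) := by
            refine setIntegral_congr_fun measurableSet_Ioi (fun z _ => ?_)
            simp only
            rw [inv_mul_cancel_left₀ (ne_of_gt ht)]
        _ = t⁻¹ • ∫ u in Ioi (t * 0), (fun u => q (t⁻¹ * u) * f u) u :=
            integral_comp_mul_left_Ioi (fun u => q (t⁻¹ * u) * f u) 0 ht
        _ = t⁻¹ * ∫ u in Ioi (0:ℝ), q (t⁻¹ * u) * f u := by
            rw [mul_zero, smul_eq_mul]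
    rw [h1, h2, h3, h4, ← mul_assoc]
    have h5 : t ^ β * t⁻¹ = t ^ (β - 1) := by
      rw [Real.rpow_sub ht, Real.rpow_one, div_eq_mul_inv]
    rw [h5, ← integral_const_mul]
    refine setIntegral_congr_fun measurableSet_Ioi (fun u hu => ?_)
    have hu' : (0:ℝ) < u := hu
    have h6 : (t⁻¹ * u) ^ (1 - β) = t ^ (β - 1) * u ^ (1 - β) := by
      rw [Real.mul_rpow (inv_nonneg.mpr ht.le) hu'.le, Real.inv_rpow ht.le,
        ← Real.rpow_neg ht.le, neg_sub]
    rw [h6]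
    have h7 : u ^ (β - 1) * u ^ (1 - β) = 1 := hzz u hu'
    calc t ^ (β - 1) * (q (t⁻¹ * u) * f u)
        = (u ^ (β - 1) * u ^ (1 - β)) * (t ^ (β - 1) * (q (t⁻¹ * u) * f u)) := by
          rw [h7, one_mul]
      _ = u ^ (β - 1) * f u * (t ^ (β - 1) * u ^ (1 - β) * q (t⁻¹ * u)) := by ring
  -- dominated convergence
  have hDCT : Tendsto (fun t : ℝ => ∫ u in Ioi (0:ℝ),
      u ^ (β - 1) * f u * ((t⁻¹ * u) ^ (1 - β) * q (t⁻¹ * u))) atTop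
      (nhds (∫ u in Ioi (0:ℝ), u ^ (β - 1) * f u * cZ)) := by
    refine tendsto_integral_filter_of_dominated_convergence
      (fun u => M * ‖u ^ (β - 1) * f u‖) ?_ ?_ ?_ ?_
    · refine Eventually.of_forall (fun t => ?_)
      exact ((by fun_prop : Measurable fun u : ℝ =>
        u ^ (β - 1) * f u * ((t⁻¹ * u) ^ (1 - β) * q (t⁻¹ * u)))).aestronglyMeasurable
    · filter_upwards [eventually_gt_atTop (0:ℝ)] with t ht
      rw [ae_restrict_iff' measurableSet_Ioi]
      refine ae_of_all _ fun u hu => ?_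
      have hu' : (0:ℝ) < u := hu
      have hz : (0:ℝ) < t⁻¹ * u := by positivity
      have h0w : 0 ≤ (t⁻¹ * u) ^ (1 - β) * q (t⁻¹ * u) :=
        mul_nonneg (Real.rpow_nonneg hz.le _) (hq0 _)
      have hwM : (t⁻¹ * u) ^ (1 - β) * q (t⁻¹ * u) ≤ M := by
        calc (t⁻¹ * u) ^ (1 - β) * q (t⁻¹ * u)
            ≤ (t⁻¹ * u) ^ (1 - β) * (M * (t⁻¹ * u) ^ (β - 1)) :=
              mul_le_mul_of_nonneg_left (hqle _ hz) (Real.rpow_nonneg hz.le _)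
          _ = ((t⁻¹ * u) ^ (1 - β) * (t⁻¹ * u) ^ (β - 1)) * M := by ring
          _ = M := by rw [hzz' _ hz, one_mul]
      rw [norm_mul]
      calc ‖u ^ (β - 1) * f u‖ * ‖(t⁻¹ * u) ^ (1 - β) * q (t⁻¹ * u)‖
          ≤ ‖u ^ (β - 1) * f u‖ * M := by
            refine mul_le_mul_of_nonneg_left ?_ (norm_nonneg _)
            rw [Real.norm_eq_abs, abs_of_nonneg h0w]
            exact hwM
        _ = M * ‖u ^ (β - 1) * f u‖ := mul_comm _ _
    · exact hf.norm.const_mul M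
    · rw [ae_restrict_iff' measurableSet_Ioi]
      refine ae_of_all _ fun u hu => ?_
      have hu' : (0:ℝ) < u := hu
      have htend : Tendsto (fun t : ℝ => t⁻¹ * u) atTop (nhdsWithin 0 (Ioi 0)) := by
        rw [tendsto_nhdsWithin_iff]
        constructor
        · have := tendsto_inv_atTop_zero.mul_const u
          simpa using this
        · filter_upwards [eventually_gt_atTop (0:ℝ)] with t ht
          exact mem_Ioi.mpr (by positivity)
      have hw := tendsto_w.comp htend
      exact tendsto_const_nhds.mul hw
  have hfinal : (∫ u in Ioi (0:ℝ), u ^ (β - 1) * f u * cZ) =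
      cZ * ∫ z in Ioi (0:ℝ), z ^ (β - 1) * f z := by
    rw [integral_mul_const, mul_comm]
  rw [hfinal] at hDCT
  refine Tendsto.congr' ?_ hDCT
  filter_upwards [eventually_gt_atTop (0:ℝ)] with t ht
  exact (hrepr t ht).symm
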